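/- Let p_1, p_2, p_3 be real numbers. There exists a probability measure μ on [0, β] with E_μ[x] = p_1, E_μ[x^2] = p_2, E_μ[x^3] = p_3 if and only if the matrices [[1, p_1],[p_1, p_2]] and [[p_1, p_2],[p_2, p_3]] and [[β − p_1, β p_1 − p_2],[β p_1 − p_2, β p_2 − p_3]] are all positive semidefinite. -/

import Mathlib

open MeasureTheory

lemma psd2_of_forall (a b c : ℝ) (h : ∀ u v : ℝ, 0 ≤ a*u^2 + 2*b*(u*v) + c*v^2) :
    (!![a,b;b,c] : Matrix (Fin 2) (Fin 2) ℝ).PosSemidef := by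
  refine Matrix.PosSemidef.of_dotProduct_mulVec_nonneg ?_ ?_
  · ext i j
    fin_cases i <;> fin_cases j <;>
      simp [Matrix.conjTranspose, Matrix.vecHead, Matrix.vecTail]
  · intro x
    have := h (x 0) (x 1)
    simp [dotProduct, Matrix.mulVec, Fin.sum_univ_two]
    nlinarith [this]

lemma psd2_elim {a b c : ℝ} (h : (!![a,b;b,c] : Matrix (Fin 2) (Fin 2) ℝ).PosSemidef) :
    0 ≤ a ∧ 0 ≤ c ∧ b^2 ≤ a*c := by
  have h1 := h.dotProduct_mulVec_nonneg ![1,0]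
  have h2 := h.dotProduct_mulVec_nonneg ![0,1]
  have h6 := h.dotProduct_mulVec_nonneg ![b,-a]
  have h7 := h.dotProduct_mulVec_nonneg ![c+1,-b]
  simp [dotProduct, Matrix.mulVec, Fin.sum_univ_two] at h1 h2 h6 h7
  refine ⟨h1, h2, ?_⟩
  rcases eq_or_lt_of_le h1 with ha | ha
  · nlinarith [h7, h2]
  · nlinarith [h6, ha]

lemma integrable_dirac'' (f : ℝ → ℝ) (hf : Measurable f) (x : ℝ) :
    Integrable f (Measure.dirac x) := by
  refine ⟨hf.aestronglyMeasurable, ?_⟩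
  rw [HasFiniteIntegral, lintegral_dirac]
  exact ENNReal.coe_lt_top

lemma integral_two_point (w1 w2 x1 x2 : ℝ) (hw1 : 0 ≤ w1) (hw2 : 0 ≤ w2)
    (f : ℝ → ℝ) (hf : Measurable f) :
    ∫ x, f x ∂(ENNReal.ofReal w1 • Measure.dirac x1 + ENNReal.ofReal w2 • Measure.dirac x2)
      = w1 * f x1 + w2 * f x2 := by
  rw [integral_add_measure
      ((integrable_dirac'' f hf x1).smul_measure ENNReal.ofReal_ne_top)
      ((integrable_dirac'' f hf x2).smul_measure ENNReal.ofReal_ne_top),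
    integral_smul_measure, integral_smul_measure, integral_dirac, integral_dirac,
    ENNReal.toReal_ofReal hw1, ENNReal.toReal_ofReal hw2]
  simp

lemma exists_of_two_point (β x1 x2 w1 w2 p1 p2 p3 : ℝ)
    (hx1 : x1 ∈ Set.Icc 0 β) (hx2 : x2 ∈ Set.Icc 0 β)
    (hw1 : 0 ≤ w1) (hw2 : 0 ≤ w2) (hsum : w1 + w2 = 1)
    (h1 : w1*x1 + w2*x2 = p1) (h2 : w1*x1^2 + w2*x2^2 = p2) (h3 : w1*x1^3 + w2*x2^3 = p3) :
    ∃ μ : Measure ℝ, IsProbabilityMeasure μ ∧ μ (Set.Icc 0 β)ᶜ = 0 ∧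
      ∫ x, x ∂μ = p1 ∧ ∫ x, x ^ 2 ∂μ = p2 ∧ ∫ x, x ^ 3 ∂μ = p3 := by
  refine ⟨ENNReal.ofReal w1 • Measure.dirac x1 + ENNReal.ofReal w2 • Measure.dirac x2,
    ⟨?_⟩, ?_, ?_, ?_, ?_⟩
  · simp only [Measure.coe_add, Pi.add_apply, Measure.smul_apply, smul_eq_mul,
      measure_univ, mul_one]
    rw [← ENNReal.ofReal_add hw1 hw2, hsum, ENNReal.ofReal_one]
  · have hm : MeasurableSet (Set.Icc (0:ℝ) β)ᶜ := measurableSet_Icc.compl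
    simp only [Measure.coe_add, Pi.add_apply, Measure.smul_apply, smul_eq_mul,
      Measure.dirac_apply' _ hm]
    rw [Set.indicator_of_notMem (by simpa using hx1), Set.indicator_of_notMem (by simpa using hx2)]
    simp
  · rw [integral_two_point w1 w2 x1 x2 hw1 hw2 (fun x => x) measurable_id]; exact h1
  · rw [integral_two_point w1 w2 x1 x2 hw1 hw2 (fun x => x ^ 2) (measurable_id.pow_const 2)]; exact h2
  · rw [integral_two_point w1 w2 x1 x2 hw1 hw2 (fun x => x ^ 3) (measurable_id.pow_const 3)]; exact h3

lemma aux_neg_lt (a r : ℝ) (hr : 0 < r) (h : a^2 < r^2) : -r < a ∧ a < r := by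
  constructor <;> nlinarith

lemma aux_le_of_sq (w r : ℝ) (hr : 0 < r) (h1 : -r < w) (h2 : r^2 ≤ w^2) : r ≤ w := by
  nlinarith

set_option maxHeartbeats 2000000 in
lemma backward_alg (β p1 p2 p3 : ℝ)
    (hd1 : p1^2 ≤ 1*p2)
    (h1nn : 0 ≤ p1) (h3nn : 0 ≤ p3) (hd2 : p2^2 ≤ p1*p3)
    (hb1 : 0 ≤ β - p1) (hb2 : 0 ≤ β*p2 - p3)
    (hd3 : (β*p1-p2)^2 ≤ (β-p1)*(β*p2-p3)) :
    ∃ x1 x2 w1 w2 : ℝ, x1 ∈ Set.Icc 0 β ∧ x2 ∈ Set.Icc 0 β ∧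
      0 ≤ w1 ∧ 0 ≤ w2 ∧ w1 + w2 = 1 ∧
      w1*x1 + w2*x2 = p1 ∧ w1*x1^2 + w2*x2^2 = p2 ∧ w1*x1^3 + w2*x2^3 = p3 := by
  rcases eq_or_lt_of_le hd1 with hs0 | hs
  · -- degenerate: p2 = p1^2, measure is dirac at p1
    have hp2 : p2 = p1^2 := by linarith
    subst hp2
    have hle : p3 ≤ p1^3 := by
      rcases eq_or_lt_of_le hb1 with hb | hb
      · nlinarith [hb2]
      · nlinarith [hd3, hb]
    have hge : p1^3 ≤ p3 := by
      rcases eq_or_lt_of_le h1nn with h0 | h0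
      · nlinarith
      · nlinarith [hd2]
    exact ⟨p1, p1, 1, 0, ⟨h1nn, by linarith⟩, ⟨h1nn, by linarith⟩, zero_le_one, le_refl 0,
      by norm_num, by ring, by ring, by nlinarith⟩
  · -- nondegenerate
    obtain ⟨s, hs_def⟩ : ∃ s : ℝ, s = p2 - p1^2 := ⟨_, rfl⟩
    obtain ⟨B, hB_def⟩ : ∃ B : ℝ, B = p3 - p1*p2 := ⟨_, rfl⟩
    obtain ⟨C, hC_def⟩ : ∃ C : ℝ, C = p2^2 - p1*p3 := ⟨_, rfl⟩
    obtain ⟨Δ, hΔ_def⟩ : ∃ Δ : ℝ, Δ = B^2 + 4*s*C := ⟨_, rfl⟩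
    have hspos : 0 < s := by rw [hs_def]; linarith
    have hp1pos : 0 < p1 := by
      rcases eq_or_lt_of_le h1nn with h0 | h0
      · exfalso; nlinarith
      · exact h0
    have hC : C ≤ 0 := by rw [hC_def]; linarith
    have hΔpos : 0 < Δ := by
      have hid : Δ = (2*s*p1 - B)^2 + 4*s^3 := by rw [hΔ_def, hB_def, hC_def, hs_def]; ring
      nlinarith [sq_nonneg (2*s*p1 - B), pow_pos hspos 3]
    obtain ⟨r, hr_def⟩ : ∃ r : ℝ, r = Real.sqrt Δ := ⟨_, rfl⟩
    have hr2 : r^2 = Δ := by rw [hr_def]; exact Real.sq_sqrt hΔpos.le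
    have hrpos : 0 < r := by rw [hr_def]; exact Real.sqrt_pos.2 hΔpos
    have hB : 0 ≤ B := by
      have hpB : p1*B = p2*s - C := by rw [hB_def, hC_def, hs_def]; ring
      nlinarith [hpB]
    have hrB : r ≤ B := by
      have h1 : Δ ≤ B^2 := by nlinarith [hΔ_def]
      rw [hr_def]
      calc Real.sqrt Δ ≤ Real.sqrt (B^2) := Real.sqrt_le_sqrt h1
        _ = B := Real.sqrt_sq hB
    obtain ⟨x1, hx1_def⟩ : ∃ x1 : ℝ, x1 = (B - r)/(2*s) := ⟨_, rfl⟩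
    obtain ⟨x2, hx2_def⟩ : ∃ x2 : ℝ, x2 = (B + r)/(2*s) := ⟨_, rfl⟩
    have hs2 : (0:ℝ) < 2*s := by linarith
    have hx1nn : 0 ≤ x1 := by rw [hx1_def]; exact div_nonneg (by linarith) hs2.le
    have hv : 0 ≤ s*β^2 - B*β - C := by
      have hid : s*β^2 - B*β - C = (β-p1)*(β*p2-p3) - (β*p1-p2)^2 := by
        rw [hB_def, hC_def, hs_def]; ring
      rw [hid]; linarith
    have hwsq : r^2 ≤ (2*s*β - B)^2 := by
      have hid : (2*s*β - B)^2 - Δ = 4*s*(s*β^2 - B*β - C) := by rw [hΔ_def]; ring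
      have := mul_nonneg hspos.le hv
      linarith [hr2]
    have hp1sq : (2*s*p1 - B)^2 < r^2 := by
      have hid : (2*s*p1 - B)^2 - Δ = -(4*s^3) := by
        rw [hΔ_def, hB_def, hC_def, hs_def]; ring
      have := pow_pos hspos 3
      linarith [hr2]
    have hp1x := aux_neg_lt _ _ hrpos hp1sq
    have hwlb : -r < 2*s*β - B := by
      have h := mul_le_mul_of_nonneg_left hb1 hs2.le
      have := hp1x.1
      nlinarith
    have hrw : r ≤ 2*s*β - B := aux_le_of_sq _ _ hrpos hwlb hwsq
    have hx2β : x2 ≤ β := by rw [hx2_def, div_le_iff₀ hs2]; linarith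
    have hx12 : x1 < x2 := by
      rw [hx1_def, hx2_def]
      apply div_lt_div_of_pos_right (by linarith) hs2
    have hx1β : x1 ≤ β := le_trans hx12.le hx2β
    have hx2nn : 0 ≤ x2 := le_trans hx1nn hx12.le
    have hd : x2 - x1 ≠ 0 := by linarith
    have hx1p1 : x1 ≤ p1 := by
      rw [hx1_def, div_le_iff₀ hs2]; linarith [hp1x.1]
    have hp1x2 : p1 ≤ x2 := by
      rw [hx2_def, le_div_iff₀ hs2]; linarith [hp1x.2]
    obtain ⟨w1, hw1_def⟩ : ∃ w1 : ℝ, w1 = (x2 - p1)/(x2 - x1) := ⟨_, rfl⟩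
    obtain ⟨w2, hw2_def⟩ : ∃ w2 : ℝ, w2 = (p1 - x1)/(x2 - x1) := ⟨_, rfl⟩
    have hw1 : 0 ≤ w1 := by rw [hw1_def]; exact div_nonneg (by linarith) (by linarith)
    have hw2 : 0 ≤ w2 := by rw [hw2_def]; exact div_nonneg (by linarith) (by linarith)
    have hsum : w1 + w2 = 1 := by rw [hw1_def, hw2_def]; field_simp; ring
    have hrr : r^2 = B^2 + 4*s*C := by rw [hr2, hΔ_def]
    have hsum12 : x1 + x2 = B/s := by rw [hx1_def, hx2_def]; field_simp; ring
    have hprod12 : x1 * x2 = -C/s := by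
      rw [hx1_def, hx2_def]
      field_simp
      linear_combination (-1) * hrr
    have m1 : w1*x1 + w2*x2 = p1 := by
      rw [hw1_def, hw2_def]; field_simp; ring
    have m2 : w1*x1^2 + w2*x2^2 = p2 := by
      have e : w1*x1^2 + w2*x2^2 = p1*(x1+x2) - x1*x2 := by
        rw [hw1_def, hw2_def]; field_simp; ring
      rw [e, hsum12, hprod12]
      field_simp
      rw [hB_def, hC_def, hs_def]; ring
    have m3 : w1*x1^3 + w2*x2^3 = p3 := by
      have e : w1*x1^3 + w2*x2^3 = p1*((x1+x2)^2 - x1*x2) - x1*x2*(x1+x2) := by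
        rw [hw1_def, hw2_def]; field_simp; ring
      rw [e, hsum12, hprod12]
      field_simp
      rw [hB_def, hC_def, hs_def]; ring
    exact ⟨x1, x2, w1, w2, ⟨hx1nn, hx1β⟩, ⟨hx2nn, hx2β⟩, hw1, hw2, hsum, m1, m2, m3⟩

/-- Truncated moment problem on `[0, β]` for moments up to order 3: a
representing probability measure exists iff the Hankel moment matrix and the
two localizing matrices are positive semidefinite. -/
theorem truncated_moment_problem_interval (β p1 p2 p3 : ℝ) :
    (∃ μ : Measure ℝ, IsProbabilityMeasure μ ∧ μ (Set.Icc 0 β)ᶜ = 0 ∧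
      ∫ x, x ∂μ = p1 ∧ ∫ x, x ^ 2 ∂μ = p2 ∧ ∫ x, x ^ 3 ∂μ = p3) ↔
    ((!![1, p1; p1, p2] : Matrix (Fin 2) (Fin 2) ℝ).PosSemidef ∧
      (!![p1, p2; p2, p3] : Matrix (Fin 2) (Fin 2) ℝ).PosSemidef ∧
      (!![β - p1, β * p1 - p2; β * p1 - p2, β * p2 - p3] :
        Matrix (Fin 2) (Fin 2) ℝ).PosSemidef) := by
  constructor
  · rintro ⟨μ, hprob, hsupp, hp1, hp2, hp3⟩
    have hae : ∀ᵐ x ∂μ, x ∈ Set.Icc 0 β := mem_ae_iff.mpr hsupp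
    have hint : ∀ k : ℕ, Integrable (fun x : ℝ => x ^ k) μ := by
      intro k
      refine Integrable.mono' (integrable_const (β ^ k))
        ((measurable_id.pow_const k).aestronglyMeasurable) ?_
      filter_upwards [hae] with x hx
      rw [Real.norm_eq_abs, abs_of_nonneg (pow_nonneg hx.1 k)]
      exact pow_le_pow_left₀ hx.1 hx.2 k
    have hx1 : Integrable (fun x : ℝ => x) μ := by simpa using hint 1
    have hx2 := hint 2
    have hx3 := hint 3
    have hpoly : ∀ c0 c1 c2 c3 : ℝ,
        ∫ x, (c0 + c1*x + c2*x^2 + c3*x^3) ∂μ = c0 + c1*p1 + c2*p2 + c3*p3 := by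
      intro c0 c1 c2 c3
      have i0 : Integrable (fun _ : ℝ => c0) μ := integrable_const c0
      have i1 : Integrable (fun x : ℝ => c1 * x) μ := hx1.const_mul c1
      have i2 : Integrable (fun x : ℝ => c2 * x ^ 2) μ := hx2.const_mul c2
      have i3 : Integrable (fun x : ℝ => c3 * x ^ 3) μ := hx3.const_mul c3
      have i01 : Integrable (fun x : ℝ => c0 + c1 * x) μ := i0.add i1
      have i012 : Integrable (fun x : ℝ => c0 + c1 * x + c2 * x ^ 2) μ := i01.add i2
      rw [integral_add i012 i3, integral_add i01 i2, integral_add i0 i1,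
        integral_const_mul, integral_const_mul, integral_const_mul, hp1, hp2, hp3]
      simp [measure_univ]
    refine ⟨psd2_of_forall _ _ _ fun u v => ?_, psd2_of_forall _ _ _ fun u v => ?_,
      psd2_of_forall _ _ _ fun u v => ?_⟩
    · have h := integral_nonneg_of_ae (μ := μ)
        (f := fun x => u^2 + (2*(u*v))*x + v^2*x^2 + 0*x^3)
        (by filter_upwards with x; simp only [Pi.zero_apply]; nlinarith [sq_nonneg (u + v*x)])
      rw [hpoly] at h
      linarith
    · have h := integral_nonneg_of_ae (μ := μ)
        (f := fun x => 0 + u^2*x + (2*(u*v))*x^2 + v^2*x^3)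
        (by filter_upwards [hae] with x hx
            simp only [Pi.zero_apply]
            nlinarith [sq_nonneg (u + v*x), hx.1, mul_nonneg hx.1 (sq_nonneg (u + v*x))])
      rw [hpoly] at h
      linarith
    · have h := integral_nonneg_of_ae (μ := μ)
        (f := fun x => β*u^2 + (2*(u*v)*β - u^2)*x + (v^2*β - 2*(u*v))*x^2 + (-v^2)*x^3)
        (by filter_upwards [hae] with x hx
            simp only [Pi.zero_apply]
            nlinarith [mul_nonneg (sub_nonneg.2 hx.2) (sq_nonneg (u + v*x))])
      rw [hpoly] at h
      linarith
  · rintro ⟨hM1, hM2, hM3⟩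
    obtain ⟨-, -, ha3⟩ := psd2_elim hM1
    obtain ⟨hb1, hb2, hb3⟩ := psd2_elim hM2
    obtain ⟨hc1, hc2, hc3⟩ := psd2_elim hM3
    obtain ⟨x1, x2, w1, w2, hx1, hx2, hw1, hw2, hsum, m1, m2, m3⟩ :=
      backward_alg β p1 p2 p3 ha3 hb1 hb2 hb3 hc1 hc2 hc3
    exact exists_of_two_point β x1 x2 w1 w2 p1 p2 p3 hx1 hx2 hw1 hw2 hsum m1 m2 m3
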